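/- Let D = ⟨R_D, C_D, ≺_D⟩ be a defeasible theory with C_D[p] finite for all p ∈ Lit(D), let E be its defeater- and priority-free form, and let ⟨T_{D,WF}, F_{D,WF}⟩ and ⟨T_{E,WF}, F_{E,WF}⟩ be the well-founded models of D and E (both taken under ADL, or both under NDL). Then for every literal p ∈ Lit(D): if p ∈ T_{E,WF} then p ∈ T_{D,WF}, and if p ∈ F_{E,WF} then p ∈ F_{D,WF}. -/

import Mathlib

namespace DLWFS

universe u

/-- Ground literals over a type `A` of atoms: atoms and their classical complements. -/
inductive Lit (A : Type u) : Type u where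
  | pos : A → Lit A
  | neg : A → Lit A

/-- The classical complement `p̄` of a literal `p`. -/
def Lit.compl {A : Type u} : Lit A → Lit A
  | .pos a => .neg a
  | .neg a => .pos a

/-- The three kinds of rules of a defeasible theory. -/
inductive RuleKind : Type where
  | strict
  | defeasible
  | defeater
deriving DecidableEq

/-- A rule of a defeasible theory: a kind, a body (a set of literals) and a head literal. -/
structure DRule (A : Type u) where
  kind : RuleKind
  body : Set (Lit A)
  head : Lit A

/-- A defeasible theory `D = ⟨R, C, ≺⟩`. -/
structure DTheory (A : Type u) where
  rules : Set (DRule A)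
  conflicts : Set (Set (Lit A))
  prec : DRule A → DRule A → Prop

namespace DTheory

variable {A : Type u}

/-- The strict rules `R_s`. -/
def Rs (D : DTheory A) : Set (DRule A) := {r ∈ D.rules | r.kind = RuleKind.strict}

/-- The defeasible rules `R_d`. -/
def Rd (D : DTheory A) : Set (DRule A) := {r ∈ D.rules | r.kind = RuleKind.defeasible}

/-- The defeater rules `R_u`. -/
def Ru (D : DTheory A) : Set (DRule A) := {r ∈ D.rules | r.kind = RuleKind.defeater}

/-- `C[p]`: the conflict sets containing literal `p`. -/
def Cset (D : DTheory A) (p : Lit A) : Set (Set (Lit A)) := {c ∈ D.conflicts | p ∈ c}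

/-- Structural conditions in the definition of a defeasible theory: a countable set of
rules with finite bodies, a countable set of finite conflict sets containing every
minimal conflict set `{p, ¬p}`, and an acyclic priority relation over non-strict rules. -/
def WellFormed (D : DTheory A) : Prop :=
  D.rules.Countable ∧ D.conflicts.Countable ∧
  (∀ r ∈ D.rules, r.body.Finite) ∧
  (∀ c ∈ D.conflicts, c.Finite) ∧
  (∀ p : A, ({Lit.pos p, Lit.neg p} : Set (Lit A)) ∈ D.conflicts) ∧
  (∀ r s, D.prec r s → r.kind ≠ RuleKind.strict ∧ s.kind ≠ RuleKind.strict) ∧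
  (∀ r, ¬ Relation.TransGen D.prec r r)

/-- `C = C_MIN`: the conflict sets are exactly the minimal ones `{p, ¬p}`. -/
def MinimalConflicts (D : DTheory A) : Prop :=
  D.conflicts = {c | ∃ p : A, c = ({Lit.pos p, Lit.neg p} : Set (Lit A))}

end DTheory

/-- A 3-valued interpretation: a pair `⟨T, F⟩` of sets. -/
abbrev Interp (L : Type u) : Type u := Set L × Set L

variable {A : Type u}

/-- `S` is ADL-unfounded with respect to theory `D` and interpretation `I = ⟨T, F⟩`. -/
def ADLUnfounded (D : DTheory A) (I : Interp (Lit A)) (S : Set (Lit A)) : Prop :=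
  ∀ p ∈ S,
    (∀ r ∈ D.Rs, r.head = p → (r.body ∩ (I.2 ∪ S)).Nonempty) ∧
    (∀ r ∈ D.Rd, r.head = p →
      (r.body ∩ (I.2 ∪ S)).Nonempty ∨
      ∃ c ∈ D.conflicts, p ∈ c ∧
        ∀ q ∈ c \ {p}, ∃ s ∈ D.rules, s.head = q ∧ s.body ⊆ I.1 ∧
          (D.prec r s ∨ s.kind = RuleKind.strict))

/-- `S` is NDL-unfounded with respect to theory `D` and interpretation `I = ⟨T, F⟩`. -/
def NDLUnfounded (D : DTheory A) (I : Interp (Lit A)) (S : Set (Lit A)) : Prop :=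
  ∀ p ∈ S,
    (∀ r ∈ D.Rs, r.head = p → (r.body ∩ (I.2 ∪ S)).Nonempty) ∧
    (∀ r ∈ D.Rd, r.head = p →
      (r.body ∩ (I.2 ∪ S)).Nonempty ∨
      ∃ c ∈ D.conflicts, p ∈ c ∧
        ∀ q ∈ c \ {p}, ∃ s ∈ D.rules, s.head = q ∧ s.body ⊆ I.1 ∧
          ¬ D.prec s r)

/-- `U_D(I)` for ADL: the union of all ADL-unfounded sets. -/
def UA (D : DTheory A) (I : Interp (Lit A)) : Set (Lit A) :=
  ⋃₀ {S | ADLUnfounded D I S}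

/-- `U_D(I)` for NDL: the union of all NDL-unfounded sets. -/
def UN (D : DTheory A) (I : Interp (Lit A)) : Set (Lit A) :=
  ⋃₀ {S | NDLUnfounded D I S}

/-- `T_D(I)`: the literals having a witness of provability with respect to `I = ⟨T, F⟩`. -/
def TD (D : DTheory A) (I : Interp (Lit A)) : Set (Lit A) :=
  {p | ∃ r ∈ D.rules, r.head = p ∧ r.body ⊆ I.1 ∧
    (r.kind = RuleKind.strict ∨
      (r.kind = RuleKind.defeasible ∧
        ∀ c ∈ D.conflicts, p ∈ c →
          ∃ q ∈ c \ {p}, ∀ s ∈ D.rules, s.head = q →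
            (D.prec s r ∨ (s.body ∩ I.2).Nonempty)))}

/-- `W_D` for ADL. -/
def WA (D : DTheory A) (I : Interp (Lit A)) : Interp (Lit A) := (TD D I, UA D I)

/-- `W_D` for NDL. -/
def WN (D : DTheory A) (I : Interp (Lit A)) : Interp (Lit A) := (TD D I, UN D I)

/-- `I` is the well-founded model for the operator `W`: the least fixpoint of `W`
(componentwise order). -/
def IsWFModel {L : Type u} (W : Interp L → Interp L) (I : Interp L) : Prop :=
  W I = I ∧ ∀ J, W J = J → I.1 ⊆ J.1 ∧ I.2 ⊆ J.2

/-- A rule of a normal logic program: `head ← pos, ∼neg`. -/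
structure NRule (A : Type u) where
  head : A
  pos : Set A
  neg : Set A

/-- A normal logic program: a set of rules. -/
abbrev NProgram (A : Type u) : Type u := Set (NRule A)

/-- Structural conditions in the definition of a normal logic program: a countable
set of ground rules with finite bodies. -/
def NProgram.WellFormed (P : NProgram A) : Prop :=
  P.Countable ∧ ∀ r ∈ P, r.pos.Finite ∧ r.neg.Finite

/-- The immediate consequence operator `T_Π` on 3-valued interpretations. -/
def TP (P : NProgram A) (I : Interp A) : Set A :=
  {a | ∃ r ∈ P, r.head = a ∧ r.pos ⊆ I.1 ∧ r.neg ⊆ I.2}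

/-- `S` is an unfounded set of program `P` with respect to interpretation `I = ⟨T, F⟩`. -/
def PUnfounded (P : NProgram A) (I : Interp A) (S : Set A) : Prop :=
  ∀ p ∈ S, ∀ r ∈ P, r.head = p →
    (r.pos ∩ (I.2 ∪ S)).Nonempty ∨ (r.neg ∩ I.1).Nonempty

/-- `U_Π(I)`: the greatest unfounded set (union of all unfounded sets). -/
def UP (P : NProgram A) (I : Interp A) : Set A :=
  ⋃₀ {S | PUnfounded P I S}

/-- `W_Π(I) = ⟨T_Π(I), U_Π(I)⟩`. -/
def WP (P : NProgram A) (I : Interp A) : Interp A := (TP P I, UP P I)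

/-- Transfinite iteration of an operator `W` from `⊥`, taking suprema at limit ordinals. -/
noncomputable def iterW {α : Type*} [CompleteLattice α] (W : α → α) : Ordinal.{0} → α :=
  fun o =>
    Ordinal.limitRecOn (motive := fun _ => α) o ⊥ (fun _ ih => W ih)
      (fun o' _ ih => ⨆ x : Set.Iio o', ih x.1 x.2)

/-- One step of the immediate consequence operator for a set of defeasible-theory rules. -/
def TRstep (R : Set (DRule A)) (S : Set (Lit A)) : Set (Lit A) :=
  {p | ∃ r ∈ R, r.head = p ∧ r.body ⊆ S}

/-- The finite iterates `T_R ↑ n`. -/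
def TRiter (R : Set (DRule A)) : ℕ → Set (Lit A)
  | 0 => ∅
  | n + 1 => TRstep R (TRiter R n)

/-- `Cl(R) = T_R ↑ ω`. -/
def ClR (R : Set (DRule A)) : Set (Lit A) := ⋃ n, TRiter R n

/-- The `α`-reduct `D_α^S` of a defeasible theory. -/
def alphaReduct (D : DTheory A) (S : Set (Lit A)) : Set (DRule A) :=
  D.Rs ∪ {r ∈ D.Rd | ∀ c ∈ D.conflicts, r.head ∈ c → ∃ q ∈ c \ {r.head}, q ∉ S}

/-- The ambiguity-propagating operator `α_D(S) = Cl(D_α^S)`. -/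
def alphaOp (D : DTheory A) (S : Set (Lit A)) : Set (Lit A) := ClR (alphaReduct D S)

/-- The `β`-reduct `D_β^S` of a defeasible theory. -/
def betaReduct (D : DTheory A) (S : Set (Lit A)) : Set (DRule A) :=
  D.Rs ∪ {r ∈ D.Rd | ∀ c ∈ D.conflicts, r.head ∈ c →
    ∃ q ∈ c \ {r.head}, ∀ s ∈ D.rules, s.head = q → (¬ s.body ⊆ S ∨ D.prec s r)}

/-- The ambiguity-blocking operator `β_D(S) = Cl(D_β^S)`. -/
def betaOp (D : DTheory A) (S : Set (Lit A)) : Set (Lit A) := ClR (betaReduct D S)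

/-- `S` is an `α`-stable set of `D`. -/
def AlphaStable (D : DTheory A) (S : Set (Lit A)) : Prop := alphaOp D S = S

/-- `S` is a `β`-stable set of `D`. -/
def BetaStable (D : DTheory A) (S : Set (Lit A)) : Prop := betaOp D S = S

/-- The sequence `X_D↑λ`: `X↑0 = ∅`, `X↑(λ+1) = β_D(β_D(X↑λ))`, unions at limits. -/
noncomputable def Xseq (D : DTheory A) : Ordinal.{0} → Set (Lit A) :=
  iterW (fun S => betaOp D (betaOp D S))

/-- The Gelfond–Lifschitz reduct `Π^S`. -/
def glReduct (P : NProgram A) (S : Set A) : NProgram A :=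
  {r' | ∃ r ∈ P, r.neg ∩ S = ∅ ∧ r' = NRule.mk r.head r.pos ∅}

/-- One step of the immediate consequence operator for a NAF-free program. -/
def TPstep (P : NProgram A) (S : Set A) : Set A :=
  {a | ∃ r ∈ P, r.head = a ∧ r.pos ⊆ S}

/-- The finite iterates `T_Π ↑ n` of a NAF-free program. -/
def TPiter (P : NProgram A) : ℕ → Set A
  | 0 => ∅
  | n + 1 => TPstep P (TPiter P n)

/-- `Cl(Π) = T_Π ↑ ω`. -/
def ClP (P : NProgram A) : Set A := ⋃ n, TPiter P n

/-- The Gelfond–Lifschitz operator `γ_Π(S) = Cl(Π^S)`. -/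
def gamma (P : NProgram A) (S : Set A) : Set A := ClP (glReduct P S)

/-- `S` is a stable model of `P`. -/
def StableModel (P : NProgram A) (S : Set A) : Prop := gamma P S = S

/-- `Prod(C[p])`: all sets obtained by choosing one literal other than `p` from each
conflict set containing `p`. -/
def ProdC (D : DTheory A) (p : Lit A) : Set (Set (Lit A)) :=
  {Q | ∃ f : Set (Lit A) → Lit A,
    (∀ c ∈ D.conflicts, p ∈ c → f c ∈ c \ {p}) ∧
    Q = f '' {c ∈ D.conflicts | p ∈ c}}

/-- The logic program translation `Π_D` of a defeasible theory `D` (negative literals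
are treated as fresh atoms, so the atoms of the program are the literals of `D`). -/
def lpTrans (D : DTheory A) : NProgram (Lit A) :=
  {r' | ∃ r ∈ D.Rs, r' = NRule.mk r.head r.body ∅} ∪
  {r' | ∃ r ∈ D.Rd, ∃ Q ∈ ProdC D r.head, r' = NRule.mk r.head r.body Q}

/-- The explicit version `Φ` of a normal program `Π`: atoms of `Φ` are the literals
over the atoms of `Π` (`¬p` being a fresh atom). -/
def explicitVer (P : NProgram A) : NProgram (Lit A) :=
  {r' | ∃ r ∈ P, r' = NRule.mk (Lit.pos r.head) (Lit.pos '' r.pos ∪ Lit.neg '' r.neg) ∅} ∪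
  {r' | ∃ p : A, r' = NRule.mk (Lit.neg p) ∅ {Lit.pos p}}

/-- The minimal conflict sets over atom type `A`. -/
def CMin (A : Type u) : Set (Set (Lit A)) :=
  {c | ∃ p : A, c = ({Lit.pos p, Lit.neg p} : Set (Lit A))}

/-- The defeasible theory translation `D_Π` of a normal program `Π`: each program rule
becomes a strict rule (default literals `∼b` becoming negative literals `¬b`), and each
atom `p` yields a presumption `∅ ⇒ ¬p`; conflict sets are minimal and `≺` is empty. -/
def dtTrans (P : NProgram A) : DTheory A :=
  { rules :=
      {e | ∃ r ∈ P, e = DRule.mk RuleKind.strict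
            (Lit.pos '' r.pos ∪ Lit.neg '' r.neg) (Lit.pos r.head)} ∪
      {e | ∃ p : A, e = DRule.mk RuleKind.defeasible ∅ (Lit.neg p)}
    conflicts := CMin A
    prec := fun _ _ => False }

/-- `M^¬ = M ∪ {¬p : p ∉ M}`, atoms being identified with positive literals. -/
def negCompl (M : Set A) : Set (Lit A) :=
  Lit.pos '' M ∪ Lit.neg '' {p | p ∉ M}

end DLWFS

namespace DLWFS

variable {A : Type u}

/-- The fresh atom `su(r)` of the defeater- and priority-free form, as a literal. -/
def suLit (r : DRule A) : Lit (A ⊕ DRule A × Bool) := Lit.pos (Sum.inr (r, true))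

/-- The fresh atom `fi(r)` of the defeater- and priority-free form, as a literal. -/
def fiLit (r : DRule A) : Lit (A ⊕ DRule A × Bool) := Lit.pos (Sum.inr (r, false))

/-- The literal `¬fi(r)`. -/
def nfiLit (r : DRule A) : Lit (A ⊕ DRule A × Bool) := Lit.neg (Sum.inr (r, false))

/-- Embedding of the literals of `D` into the literals of its defeater- and
priority-free form. -/
def liftLit : Lit A → Lit (A ⊕ DRule A × Bool)
  | .pos a => .pos (Sum.inl a)
  | .neg a => .neg (Sum.inl a)

/-- `RuleKind.strict` if the proposition holds, `RuleKind.defeasible` otherwise. -/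
noncomputable def strictIf (c : Prop) : RuleKind :=
  @ite _ c (Classical.propDecidable c) RuleKind.strict RuleKind.defeasible

/-- The rules of the defeater- and priority-free form `E` of `D`:
(1) for each rule `r : A ⤳ p` of `D`, the strict rule `A → su(r)` and the rule
`{su(r)} → fi(r)` (strict if `r` is strict, defeasible if `r` is defeasible or a
defeater); (2) if `r` is strict or defeasible, the strict rule `{fi(r)} → p`;
(3) for each conflict set `c ∈ C_D[head(r)]` with `r` defeasible and each choice of
rules `s q ∈ R_D[q]` (for `q ∈ c − {head(r)}`) with `¬ (s q ≺_D r)`, the rule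
`{su(s q) : q ∈ c − {head r}} ⟶ ¬fi(r)`, strict if every `s q` is strict or satisfies
`r ≺_D s q`, and defeasible otherwise. -/
noncomputable def EFormRules (D : DTheory A) : Set (DRule (A ⊕ DRule A × Bool)) :=
  {e | ∃ r ∈ D.rules, e = DRule.mk RuleKind.strict (liftLit '' r.body) (suLit r)} ∪
  {e | ∃ r ∈ D.rules,
    e = DRule.mk (strictIf (r.kind = RuleKind.strict)) {suLit r} (fiLit r)} ∪
  {e | ∃ r ∈ D.rules, r.kind ≠ RuleKind.defeater ∧
    e = DRule.mk RuleKind.strict {fiLit r} (liftLit r.head)} ∪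
  {e | ∃ r ∈ D.Rd, ∃ c ∈ D.conflicts, r.head ∈ c ∧
    ∃ s : Lit A → DRule A,
      (∀ q ∈ c \ {r.head}, s q ∈ D.rules ∧ (s q).head = q ∧ ¬ D.prec (s q) r) ∧
      e = DRule.mk
        (strictIf (∀ q ∈ c \ {r.head},
          (s q).kind = RuleKind.strict ∨ D.prec r (s q)))
        ((fun q => suLit (s q)) '' (c \ {r.head})) (nfiLit r)}

/-- The defeater- and priority-free form `E` of a defeasible theory `D`: it uses the
rules above, minimal conflict sets, and the empty priority relation. -/
noncomputable def EForm (D : DTheory A) : DTheory (A ⊕ DRule A × Bool) :=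
  { rules := EFormRules D
    conflicts := CMin (A ⊕ DRule A × Bool)
    prec := fun _ _ => False }

end DLWFS

namespace DLWFS

section Core

variable {A : Type u}

/-- Mode-parametric superiority condition. -/
def selP (adl : Bool) (D : DTheory A) (r s : DRule A) : Prop :=
  match adl with
  | true => D.prec r s ∨ s.kind = RuleKind.strict
  | false => ¬ D.prec s r

/-- Mode-parametric unfounded sets. -/
def MUnf (adl : Bool) (D : DTheory A) (I : Interp (Lit A)) (S : Set (Lit A)) : Prop :=
  ∀ p ∈ S,
    (∀ r ∈ D.Rs, r.head = p → (r.body ∩ (I.2 ∪ S)).Nonempty) ∧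
    (∀ r ∈ D.Rd, r.head = p →
      (r.body ∩ (I.2 ∪ S)).Nonempty ∨
      ∃ c ∈ D.conflicts, p ∈ c ∧
        ∀ q ∈ c \ {p}, ∃ s ∈ D.rules, s.head = q ∧ s.body ⊆ I.1 ∧ selP adl D r s)

def UMg (adl : Bool) (D : DTheory A) (I : Interp (Lit A)) : Set (Lit A) :=
  ⋃₀ {S | MUnf adl D I S}

lemma UA_eq_UMg (D : DTheory A) (I : Interp (Lit A)) : UA D I = UMg true D I := rfl

lemma UN_eq_UMg (D : DTheory A) (I : Interp (Lit A)) : UN D I = UMg false D I := rfl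

lemma UMg_unfounded (adl : Bool) (D : DTheory A) (I : Interp (Lit A)) :
    MUnf adl D I (UMg adl D I) := by
  intro p hp
  obtain ⟨S, hS, hpS⟩ := hp
  have h := hS p hpS
  have hsub : I.2 ∪ S ⊆ I.2 ∪ UMg adl D I :=
    Set.union_subset_union_right _ (Set.subset_sUnion_of_mem hS)
  exact ⟨fun r hr hh => (h.1 r hr hh).mono (Set.inter_subset_inter_right _ hsub),
    fun r hr hh => (h.2 r hr hh).imp (fun hn => hn.mono (Set.inter_subset_inter_right _ hsub)) id⟩

lemma selP_not_prec {adl : Bool} {D : DTheory A} (hwf : D.WellFormed) {r s : DRule A}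
    (h : selP adl D r s) : ¬ D.prec s r := by
  cases adl with
  | false => exact h
  | true =>
    rcases h with h | h
    · intro hsr
      exact hwf.2.2.2.2.2.2 r (Relation.TransGen.head h (Relation.TransGen.single hsr))
    · intro hsr
      exact (hwf.2.2.2.2.2.1 s r hsr).1 h

/-! ### Literal shape lemmas -/

lemma compl_ne {B : Type*} (p : Lit B) : p.compl ≠ p := by
  cases p <;> simp [Lit.compl]

@[simp] lemma liftLit_inj {p q : Lit A} : liftLit p = liftLit q ↔ p = q := by
  cases p <;> cases q <;> simp [liftLit]

lemma liftLit_compl (p : Lit A) : (liftLit p).compl = liftLit p.compl := by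
  cases p <;> rfl

@[simp] lemma suLit_inj {r s : DRule A} : suLit r = suLit s ↔ r = s := by
  simp [suLit]

@[simp] lemma fiLit_inj {r s : DRule A} : fiLit r = fiLit s ↔ r = s := by
  simp [fiLit]

@[simp] lemma nfiLit_inj {r s : DRule A} : nfiLit r = nfiLit s ↔ r = s := by
  simp [nfiLit]

@[simp] lemma suLit_eq_fiLit {r s : DRule A} : suLit r = fiLit s ↔ False := by
  simp [suLit, fiLit]

@[simp] lemma fiLit_eq_suLit {r s : DRule A} : fiLit r = suLit s ↔ False := by
  simp [suLit, fiLit]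

@[simp] lemma suLit_eq_nfiLit {r s : DRule A} : suLit r = nfiLit s ↔ False := by
  simp [suLit, nfiLit]

@[simp] lemma nfiLit_eq_suLit {r s : DRule A} : nfiLit r = suLit s ↔ False := by
  simp [suLit, nfiLit]

@[simp] lemma fiLit_eq_nfiLit {r s : DRule A} : fiLit r = nfiLit s ↔ False := by
  simp [fiLit, nfiLit]

@[simp] lemma nfiLit_eq_fiLit {r s : DRule A} : nfiLit r = fiLit s ↔ False := by
  simp [fiLit, nfiLit]

@[simp] lemma liftLit_eq_suLit {p : Lit A} {s : DRule A} : liftLit p = suLit s ↔ False := by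
  cases p <;> simp [liftLit, suLit]

@[simp] lemma suLit_eq_liftLit {p : Lit A} {s : DRule A} : suLit s = liftLit p ↔ False := by
  cases p <;> simp [liftLit, suLit]

@[simp] lemma liftLit_eq_fiLit {p : Lit A} {s : DRule A} : liftLit p = fiLit s ↔ False := by
  cases p <;> simp [liftLit, fiLit]

@[simp] lemma fiLit_eq_liftLit {p : Lit A} {s : DRule A} : fiLit s = liftLit p ↔ False := by
  cases p <;> simp [liftLit, fiLit]

@[simp] lemma liftLit_eq_nfiLit {p : Lit A} {s : DRule A} : liftLit p = nfiLit s ↔ False := by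
  cases p <;> simp [liftLit, nfiLit]

@[simp] lemma nfiLit_eq_liftLit {p : Lit A} {s : DRule A} : nfiLit s = liftLit p ↔ False := by
  cases p <;> simp [liftLit, nfiLit]

/-! ### CMin lemmas -/

lemma cmin_pair {B : Type*} (p : Lit B) : ({p, p.compl} : Set (Lit B)) ∈ CMin B := by
  cases p with
  | pos a => exact ⟨a, rfl⟩
  | neg a => exact ⟨a, (Set.pair_comm _ _)⟩

lemma cmin_eq {B : Type*} {c : Set (Lit B)} {p : Lit B} (hc : c ∈ CMin B) (hp : p ∈ c) :
    c = {p, p.compl} := by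
  obtain ⟨a, rfl⟩ := hc
  rcases hp with rfl | hp
  · rfl
  · rw [Set.mem_singleton_iff] at hp
    subst hp
    exact Set.pair_comm _ _

lemma pair_diff {B : Type*} (p : Lit B) :
    (({p, p.compl} : Set (Lit B)) \ {p}) = {p.compl} := by
  ext x
  simp only [Set.mem_diff, Set.mem_insert_iff, Set.mem_singleton_iff]
  constructor
  · rintro ⟨h | h, hne⟩
    · exact absurd h hne
    · exact h
  · rintro rfl
    exact ⟨Or.inr rfl, compl_ne p⟩

lemma cmin_inner {B : Type*} (p : Lit B) (K : Lit B → Prop) :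
    (∀ c ∈ CMin B, p ∈ c → ∃ q ∈ c \ {p}, K q) ↔ K p.compl := by
  constructor
  · intro h
    obtain ⟨q, hq, hKq⟩ := h {p, p.compl} (cmin_pair p) (Or.inl rfl)
    rw [pair_diff] at hq
    rw [Set.mem_singleton_iff] at hq
    exact hq ▸ hKq
  · intro h c hc hpc
    rw [cmin_eq hc hpc, pair_diff]
    exact ⟨p.compl, rfl, h⟩

lemma cmin_inner2 {B : Type*} (p : Lit B) (K : Lit B → Prop) :
    (∃ c ∈ CMin B, p ∈ c ∧ ∀ q ∈ c \ {p}, K q) ↔ K p.compl := by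
  constructor
  · rintro ⟨c, hc, hpc, h⟩
    rw [cmin_eq hc hpc, pair_diff] at h
    exact h p.compl rfl
  · intro h
    refine ⟨{p, p.compl}, cmin_pair p, Or.inl rfl, ?_⟩
    rw [pair_diff]
    rintro q rfl
    exact h

/-! ### strictIf lemmas -/

lemma strictIf_pos {c : Prop} (h : c) : strictIf c = RuleKind.strict := by
  unfold strictIf
  exact if_pos h

lemma strictIf_neg {c : Prop} (h : ¬c) : strictIf c = RuleKind.defeasible := by
  unfold strictIf
  exact if_neg h

lemma strictIf_eq_strict {c : Prop} : strictIf c = RuleKind.strict ↔ c := by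
  by_cases h : c <;> simp [strictIf_pos, strictIf_neg, h]

lemma strictIf_eq_def {c : Prop} : strictIf c = RuleKind.defeasible ↔ ¬c := by
  by_cases h : c <;> simp [strictIf_pos, strictIf_neg, h]

/-! ### EForm rule anatomy -/

@[simp] lemma EForm_rules (D : DTheory A) : (EForm D).rules = EFormRules D := rfl

@[simp] lemma EForm_conflicts (D : DTheory A) :
    (EForm D).conflicts = CMin (A ⊕ DRule A × Bool) := rfl

@[simp] lemma EForm_prec (D : DTheory A) (r s : DRule (A ⊕ DRule A × Bool)) :
    (EForm D).prec r s ↔ False := Iff.rfl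

lemma mem_ERs {D : DTheory A} {e : DRule (A ⊕ DRule A × Bool)} :
    e ∈ (EForm D).Rs ↔ e ∈ EFormRules D ∧ e.kind = RuleKind.strict := Iff.rfl

lemma mem_ERd {D : DTheory A} {e : DRule (A ⊕ DRule A × Bool)} :
    e ∈ (EForm D).Rd ↔ e ∈ EFormRules D ∧ e.kind = RuleKind.defeasible := Iff.rfl

lemma memP1 {D : DTheory A} {r : DRule A} (hr : r ∈ D.rules) :
    DRule.mk RuleKind.strict (liftLit '' r.body) (suLit r) ∈ EFormRules D :=
  Set.mem_union_left _ (Set.mem_union_left _ (Set.mem_union_left _ ⟨r, hr, rfl⟩))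

lemma memP2 {D : DTheory A} {r : DRule A} (hr : r ∈ D.rules) :
    DRule.mk (strictIf (r.kind = RuleKind.strict)) {suLit r} (fiLit r) ∈ EFormRules D :=
  Set.mem_union_left _ (Set.mem_union_left _ (Set.mem_union_right _ ⟨r, hr, rfl⟩))

lemma memP3 {D : DTheory A} {r : DRule A} (hr : r ∈ D.rules)
    (hk : r.kind ≠ RuleKind.defeater) :
    DRule.mk RuleKind.strict {fiLit r} (liftLit r.head) ∈ EFormRules D :=
  Set.mem_union_left _ (Set.mem_union_right _ ⟨r, hr, hk, rfl⟩)

lemma memP4 {D : DTheory A} {r : DRule A} (hr : r ∈ D.Rd) {c : Set (Lit A)}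
    (hc : c ∈ D.conflicts) (hpc : r.head ∈ c) {f : Lit A → DRule A}
    (hf : ∀ q ∈ c \ {r.head}, f q ∈ D.rules ∧ (f q).head = q ∧ ¬ D.prec (f q) r) :
    DRule.mk
      (strictIf (∀ q ∈ c \ {r.head}, (f q).kind = RuleKind.strict ∨ D.prec r (f q)))
      ((fun q => suLit (f q)) '' (c \ {r.head})) (nfiLit r) ∈ EFormRules D :=
  Set.mem_union_right _ ⟨r, hr, c, hc, hpc, f, hf, rfl⟩

lemma ruleE_cases {D : DTheory A} {e : DRule (A ⊕ DRule A × Bool)} (he : e ∈ EFormRules D) :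
    (∃ r ∈ D.rules, e = DRule.mk RuleKind.strict (liftLit '' r.body) (suLit r)) ∨
    (∃ r ∈ D.rules,
      e = DRule.mk (strictIf (r.kind = RuleKind.strict)) {suLit r} (fiLit r)) ∨
    (∃ r ∈ D.rules, r.kind ≠ RuleKind.defeater ∧
      e = DRule.mk RuleKind.strict {fiLit r} (liftLit r.head)) ∨
    (∃ r ∈ D.Rd, ∃ c ∈ D.conflicts, r.head ∈ c ∧
      ∃ s : Lit A → DRule A,
        (∀ q ∈ c \ {r.head}, s q ∈ D.rules ∧ (s q).head = q ∧ ¬ D.prec (s q) r) ∧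
        e = DRule.mk
          (strictIf (∀ q ∈ c \ {r.head},
            (s q).kind = RuleKind.strict ∨ D.prec r (s q)))
          ((fun q => suLit (s q)) '' (c \ {r.head})) (nfiLit r)) := by
  rcases he with ((h | h) | h) | h
  · exact Or.inl h
  · exact Or.inr (Or.inl h)
  · exact Or.inr (Or.inr (Or.inl h))
  · exact Or.inr (Or.inr (Or.inr h))

lemma ruleE_head_su {D : DTheory A} {e : DRule (A ⊕ DRule A × Bool)} {r : DRule A}
    (he : e ∈ EFormRules D) (hh : e.head = suLit r) :
    r ∈ D.rules ∧ e = DRule.mk RuleKind.strict (liftLit '' r.body) (suLit r) := by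
  rcases ruleE_cases he with ⟨r', hr', rfl⟩ | ⟨r', hr', rfl⟩ | ⟨r', hr', hk, rfl⟩ |
    ⟨r', hr', c, hc, hpc, f, hf, rfl⟩
  · rw [suLit_inj] at hh
    subst hh
    exact ⟨hr', rfl⟩
  · exact absurd hh (by simp)
  · exact absurd hh (by simp)
  · exact absurd hh (by simp)

lemma ruleE_head_fi {D : DTheory A} {e : DRule (A ⊕ DRule A × Bool)} {r : DRule A}
    (he : e ∈ EFormRules D) (hh : e.head = fiLit r) :
    r ∈ D.rules ∧
      e = DRule.mk (strictIf (r.kind = RuleKind.strict)) {suLit r} (fiLit r) := by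
  rcases ruleE_cases he with ⟨r', hr', rfl⟩ | ⟨r', hr', rfl⟩ | ⟨r', hr', hk, rfl⟩ |
    ⟨r', hr', c, hc, hpc, f, hf, rfl⟩
  · exact absurd hh (by simp)
  · rw [fiLit_inj] at hh
    subst hh
    exact ⟨hr', rfl⟩
  · exact absurd hh (by simp)
  · exact absurd hh (by simp)

lemma ruleE_head_lift {D : DTheory A} {e : DRule (A ⊕ DRule A × Bool)} {p : Lit A}
    (he : e ∈ EFormRules D) (hh : e.head = liftLit p) :
    ∃ r ∈ D.rules, r.kind ≠ RuleKind.defeater ∧ r.head = p ∧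
      e = DRule.mk RuleKind.strict {fiLit r} (liftLit p) := by
  rcases ruleE_cases he with ⟨r', hr', rfl⟩ | ⟨r', hr', rfl⟩ | ⟨r', hr', hk, rfl⟩ |
    ⟨r', hr', c, hc, hpc, f, hf, rfl⟩
  · exact absurd hh (by simp)
  · exact absurd hh (by simp)
  · rw [liftLit_inj] at hh
    subst hh
    exact ⟨r', hr', hk, rfl, rfl⟩
  · exact absurd hh (by simp)

lemma ruleE_head_nfi {D : DTheory A} {e : DRule (A ⊕ DRule A × Bool)} {r : DRule A}
    (he : e ∈ EFormRules D) (hh : e.head = nfiLit r) :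
    r ∈ D.Rd ∧ ∃ c ∈ D.conflicts, r.head ∈ c ∧
      ∃ f : Lit A → DRule A,
        (∀ q ∈ c \ {r.head}, f q ∈ D.rules ∧ (f q).head = q ∧ ¬ D.prec (f q) r) ∧
        e = DRule.mk
          (strictIf (∀ q ∈ c \ {r.head},
            (f q).kind = RuleKind.strict ∨ D.prec r (f q)))
          ((fun q => suLit (f q)) '' (c \ {r.head})) (nfiLit r) := by
  rcases ruleE_cases he with ⟨r', hr', rfl⟩ | ⟨r', hr', rfl⟩ | ⟨r', hr', hk, rfl⟩ |
    ⟨r', hr', c, hc, hpc, f, hf, rfl⟩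
  · exact absurd hh (by simp)
  · exact absurd hh (by simp)
  · exact absurd hh (by simp)
  · rw [nfiLit_inj] at hh
    subst hh
    exact ⟨hr', c, hc, hpc, f, hf, rfl⟩

lemma ruleE_head_ne_negsu {D : DTheory A} {e : DRule (A ⊕ DRule A × Bool)} {r : DRule A}
    (he : e ∈ EFormRules D) : e.head ≠ Lit.neg (Sum.inr (r, true)) := by
  rcases ruleE_cases he with ⟨r', hr', rfl⟩ | ⟨r', hr', rfl⟩ | ⟨r', hr', hk, rfl⟩ |
    ⟨r', hr', c, hc, hpc, f, hf, rfl⟩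
  · simp [suLit]
  · simp [fiLit]
  · cases h' : r'.head <;> simp [liftLit, h']
  · simp [nfiLit]

/-! ### The candidate fixpoint interpretation for `EForm D` -/

variable (D : DTheory A) (T F : Set (Lit A))

/-- The inner witness-of-provability side condition of `TD`. -/
def Wc (r : DRule A) : Prop :=
  ∀ c ∈ D.conflicts, r.head ∈ c →
    ∃ q ∈ c \ {r.head}, ∀ s ∈ D.rules, s.head = q →
      (D.prec s r ∨ (s.body ∩ F).Nonempty)

/-- The mode-parametric conflict escape condition of unfounded sets. -/
def UcS (adl : Bool) (r : DRule A) : Prop :=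
  ∃ c ∈ D.conflicts, r.head ∈ c ∧
    ∀ q ∈ c \ {r.head}, ∃ s ∈ D.rules, s.head = q ∧ s.body ⊆ T ∧ selP adl D r s

/-- Condition for `nfi r` to be provable. -/
def NfiT (r : DRule A) : Prop :=
  r ∈ D.rules ∧ r.kind = RuleKind.defeasible ∧
    ∃ c ∈ D.conflicts, r.head ∈ c ∧
      ∃ f : Lit A → DRule A,
        (∀ q ∈ c \ {r.head},
          f q ∈ D.rules ∧ (f q).head = q ∧ ¬ D.prec (f q) r ∧ (f q).body ⊆ T) ∧
        ((∀ q ∈ c \ {r.head}, (f q).kind = RuleKind.strict ∨ D.prec r (f q)) ∨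
          (r.body ∩ F).Nonempty)

/-- Condition for `nfi r` to be unfounded. -/
def NfiF (adl : Bool) (r : DRule A) : Prop :=
  r ∈ D.rules → r.kind = RuleKind.defeasible →
    ∀ c ∈ D.conflicts, r.head ∈ c →
      ∀ f : Lit A → DRule A,
        (∀ q ∈ c \ {r.head}, f q ∈ D.rules ∧ (f q).head = q ∧ ¬ D.prec (f q) r) →
        ((∃ q ∈ c \ {r.head}, ((f q).body ∩ F).Nonempty) ∨
          ((¬ ∀ q ∈ c \ {r.head}, (f q).kind = RuleKind.strict ∨ D.prec r (f q)) ∧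
            adl = false ∧ r.body ⊆ T))

/-- The true part of the candidate fixpoint of `W` for `EForm D`. -/
def JTs : Set (Lit (A ⊕ DRule A × Bool)) :=
  {l | match l with
    | .pos (.inl a) => Lit.pos a ∈ T
    | .neg (.inl a) => Lit.neg a ∈ T
    | .pos (.inr (r, true)) => r ∈ D.rules ∧ r.body ⊆ T
    | .pos (.inr (r, false)) =>
        r ∈ D.rules ∧ r.body ⊆ T ∧ (r.kind ≠ RuleKind.defeasible ∨ Wc D F r)
    | .neg (.inr (_, true)) => False
    | .neg (.inr (r, false)) => NfiT D T F r}

/-- The false part of the candidate fixpoint of `W` for `EForm D`. -/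
def JFs (adl : Bool) : Set (Lit (A ⊕ DRule A × Bool)) :=
  {l | match l with
    | .pos (.inl a) => Lit.pos a ∈ F
    | .neg (.inl a) => Lit.neg a ∈ F
    | .pos (.inr (r, true)) => r ∉ D.rules ∨ (r.body ∩ F).Nonempty
    | .pos (.inr (r, false)) =>
        r ∉ D.rules ∨ (r.body ∩ F).Nonempty ∨
          (r.kind = RuleKind.defeasible ∧ UcS D T adl r)
    | .neg (.inr (_, true)) => True
    | .neg (.inr (r, false)) => NfiF D T F adl r}

variable {D T F}

@[simp] lemma mem_JT_lift {p : Lit A} : liftLit p ∈ JTs D T F ↔ p ∈ T := by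
  cases p <;> exact Iff.rfl

@[simp] lemma mem_JT_su {r : DRule A} :
    suLit r ∈ JTs D T F ↔ r ∈ D.rules ∧ r.body ⊆ T := Iff.rfl

@[simp] lemma mem_JT_fi {r : DRule A} :
    fiLit r ∈ JTs D T F ↔
      r ∈ D.rules ∧ r.body ⊆ T ∧ (r.kind ≠ RuleKind.defeasible ∨ Wc D F r) := Iff.rfl

@[simp] lemma mem_JT_nfi {r : DRule A} : nfiLit r ∈ JTs D T F ↔ NfiT D T F r := Iff.rfl

@[simp] lemma mem_JT_negsu {r : DRule A} :
    (Lit.neg (Sum.inr (r, true)) : Lit (A ⊕ DRule A × Bool)) ∈ JTs D T F ↔ False := Iff.rfl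

@[simp] lemma mem_JF_lift {adl : Bool} {p : Lit A} :
    liftLit p ∈ JFs D T F adl ↔ p ∈ F := by
  cases p <;> exact Iff.rfl

@[simp] lemma mem_JF_su {adl : Bool} {r : DRule A} :
    suLit r ∈ JFs D T F adl ↔ (r ∉ D.rules ∨ (r.body ∩ F).Nonempty) := Iff.rfl

@[simp] lemma mem_JF_fi {adl : Bool} {r : DRule A} :
    fiLit r ∈ JFs D T F adl ↔
      (r ∉ D.rules ∨ (r.body ∩ F).Nonempty ∨
        (r.kind = RuleKind.defeasible ∧ UcS D T adl r)) := Iff.rfl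

@[simp] lemma mem_JF_nfi {adl : Bool} {r : DRule A} :
    nfiLit r ∈ JFs D T F adl ↔ NfiF D T F adl r := Iff.rfl

@[simp] lemma mem_JF_negsu {adl : Bool} {r : DRule A} :
    (Lit.neg (Sum.inr (r, true)) : Lit (A ⊕ DRule A × Bool)) ∈ JFs D T F adl ↔ True :=
  Iff.rfl

/-! ### Translation helpers -/

lemma selP_E {adl : Bool} {D : DTheory A} {e s : DRule (A ⊕ DRule A × Bool)}
    (h : adl = true → s.kind = RuleKind.strict) : selP adl (EForm D) e s := by
  cases adl with
  | false => exact fun hc => hc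
  | true => exact Or.inr (h rfl)

/-- From the `D`-side escape condition, build a suitable attack rule in `EForm D`. -/
lemma ucs_to_rule {adl : Bool} {D : DTheory A} {T F : Set (Lit A)} (hwf : D.WellFormed)
    (p₀ : Lit A) {r : DRule A} (hr : r ∈ D.rules) (hkd : r.kind = RuleKind.defeasible)
    (h : UcS D T adl r) :
    ∃ e ∈ EFormRules D, e.head = nfiLit r ∧ e.body ⊆ JTs D T F ∧
      (adl = true → e.kind = RuleKind.strict) := by
  obtain ⟨c, hc, hpc, hall⟩ := h
  classical
  set f : Lit A → DRule A := fun q =>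
    if h : ∃ s, s ∈ D.rules ∧ s.head = q ∧ s.body ⊆ T ∧ selP adl D r s then h.choose
    else DRule.mk RuleKind.strict ∅ p₀ with hfdef
  have hfP : ∀ q ∈ c \ {r.head},
      f q ∈ D.rules ∧ (f q).head = q ∧ (f q).body ⊆ T ∧ selP adl D r (f q) := by
    intro q hq
    obtain ⟨s, hs, hsh, hsb, hssel⟩ := hall q hq
    have hex : ∃ s, s ∈ D.rules ∧ s.head = q ∧ s.body ⊆ T ∧ selP adl D r s :=
      ⟨s, hs, hsh, hsb, hssel⟩
    rw [hfdef]
    simp only [dif_pos hex]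
    exact hex.choose_spec
  have hval : ∀ q ∈ c \ {r.head}, f q ∈ D.rules ∧ (f q).head = q ∧ ¬ D.prec (f q) r :=
    fun q hq => ⟨(hfP q hq).1, (hfP q hq).2.1, selP_not_prec hwf (hfP q hq).2.2.2⟩
  refine ⟨_, memP4 ⟨hr, hkd⟩ hc hpc hval, rfl, ?_, ?_⟩
  · rintro x ⟨q, hq, rfl⟩
    exact mem_JT_su.2 ⟨(hfP q hq).1, (hfP q hq).2.2.1⟩
  · intro hadl
    subst hadl
    refine strictIf_pos ?_
    intro q hq
    exact ((hfP q hq).2.2.2).symm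

/-- From a suitable attack rule in `EForm D`, recover the `D`-side escape condition. -/
lemma rule_to_ucs {adl : Bool} {D : DTheory A} {T F : Set (Lit A)}
    {e₀ : DRule (A ⊕ DRule A × Bool)} {r : DRule A}
    (h : ∃ s' ∈ (EForm D).rules, s'.head = nfiLit r ∧ s'.body ⊆ JTs D T F ∧
      selP adl (EForm D) e₀ s') :
    r.kind = RuleKind.defeasible ∧ UcS D T adl r := by
  obtain ⟨s', hs', hh', hbJ, hsel⟩ := h
  obtain ⟨⟨hrr, hkd⟩, c, hc, hpc, f, hfv, rfl⟩ := ruleE_head_nfi hs' hh'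
  refine ⟨hkd, c, hc, hpc, fun q hq => ⟨f q, (hfv q hq).1, (hfv q hq).2.1, ?_, ?_⟩⟩
  · exact (mem_JT_su.1 (hbJ (Set.mem_image_of_mem _ hq))).2
  · cases adl with
    | false => exact (hfv q hq).2.2
    | true =>
      rcases hsel with hF | hstr
      · exact hF.elim
      · exact ((strictIf_eq_strict.1 hstr) q hq).symm

/-- The attack-saturation condition on `nfi r` corresponds to the witness condition `Wc`. -/
lemma X_iff_Wc {adl : Bool} {D : DTheory A} {T F : Set (Lit A)} (hwf : D.WellFormed)
    (p₀ : Lit A) {r : DRule A} (hr : r ∈ D.rules) (hkd : r.kind = RuleKind.defeasible) :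
    (∀ s' ∈ EFormRules D, s'.head = nfiLit r → (s'.body ∩ JFs D T F adl).Nonempty) ↔
      Wc D F r := by
  constructor
  · intro hX c hc hpc
    by_contra hcon
    push_neg at hcon
    classical
    set f : Lit A → DRule A := fun q =>
      if h : ∃ s, s ∈ D.rules ∧ s.head = q ∧ ¬ D.prec s r ∧ ¬ (s.body ∩ F).Nonempty
      then h.choose else DRule.mk RuleKind.strict ∅ p₀ with hfdef
    have hfP : ∀ q ∈ c \ {r.head}, f q ∈ D.rules ∧ (f q).head = q ∧ ¬ D.prec (f q) r ∧
        ¬ ((f q).body ∩ F).Nonempty := by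
      intro q hq
      obtain ⟨s, hs, hsh, hsel⟩ := hcon q hq
      have hex : ∃ s, s ∈ D.rules ∧ s.head = q ∧ ¬ D.prec s r ∧ ¬ (s.body ∩ F).Nonempty :=
        ⟨s, hs, hsh, hsel.1, by rw [Set.not_nonempty_iff_eq_empty]; exact hsel.2⟩
      rw [hfdef]
      simp only [dif_pos hex]
      exact hex.choose_spec
    have hval : ∀ q ∈ c \ {r.head}, f q ∈ D.rules ∧ (f q).head = q ∧ ¬ D.prec (f q) r :=
      fun q hq => ⟨(hfP q hq).1, (hfP q hq).2.1, (hfP q hq).2.2.1⟩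
    obtain ⟨x, hx1, hx2⟩ := hX _ (memP4 ⟨hr, hkd⟩ hc hpc hval) rfl
    obtain ⟨q, hq, rfl⟩ := hx1
    rcases mem_JF_su.1 hx2 with h' | h'
    · exact h' (hfP q hq).1
    · exact (hfP q hq).2.2.2 h'
  · intro hW e he hh
    obtain ⟨⟨hrr', hkd'⟩, c, hc, hpc, f, hf, rfl⟩ := ruleE_head_nfi he hh
    obtain ⟨q, hq, hq2⟩ := hW c hc hpc
    have hfq := hf q hq
    rcases hq2 (f q) hfq.1 hfq.2.1 with hp | hne
    · exact absurd hp hfq.2.2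
    · exact ⟨suLit (f q), Set.mem_image_of_mem _ hq, mem_JF_su.2 (Or.inr hne)⟩

/-! ### The fixpoint property of the candidate interpretation -/

lemma TD_E {adl : Bool} {D : DTheory A} {T F : Set (Lit A)} (hwf : D.WellFormed)
    (p₀ : Lit A) (hT : TD D (T, F) = T) :
    TD (EForm D) (JTs D T F, JFs D T F adl) = JTs D T F := by
  ext l
  constructor
  · rintro ⟨e, he, hhead, hbody, hcond⟩
    rcases ruleE_cases he with ⟨r, hr, rfl⟩ | ⟨r, hr, rfl⟩ | ⟨r, hr, hk, rfl⟩ |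
      ⟨r, hrd, c, hc, hpc, f, hf, rfl⟩
    · -- su rule
      subst hhead
      refine mem_JT_su.2 ⟨hr, fun q hq => ?_⟩
      exact mem_JT_lift.1 (hbody (Set.mem_image_of_mem _ hq))
    · -- fi rule
      subst hhead
      have hbT : r.body ⊆ T := (mem_JT_su.1 (hbody rfl)).2
      refine mem_JT_fi.2 ⟨hr, hbT, ?_⟩
      by_cases hkd : r.kind = RuleKind.defeasible
      · right
        rcases hcond with hstrict | ⟨_, hX⟩
        · rw [show (DRule.mk (strictIf (r.kind = RuleKind.strict)) {suLit r} (fiLit r)).kind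
            = strictIf (r.kind = RuleKind.strict) from rfl, strictIf_eq_strict] at hstrict
          rw [hkd] at hstrict
          exact absurd hstrict (by simp)
        · refine (X_iff_Wc (adl := adl) (T := T) (F := F) hwf p₀ hr hkd).1 ?_
          intro s' hs' hh'
          have hK := (cmin_inner (fiLit r)
            (fun q => ∀ s ∈ (EForm D).rules, s.head = q →
              ((EForm D).prec s _ ∨ (s.body ∩ (JTs D T F, JFs D T F adl).2).Nonempty))).1 hX
          rcases hK s' hs' hh' with hFa | hne
          · exact hFa.elim
          · exact hne
      · exact Or.inl hkd
    · -- lift rule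
      subst hhead
      refine mem_JT_lift.2 ?_
      rw [← hT]
      have hfiJT := mem_JT_fi.1 (hbody rfl)
      refine ⟨r, hr, rfl, hfiJT.2.1, ?_⟩
      rcases hk2 : r.kind with _ | _ | _
      · exact Or.inl rfl
      · refine Or.inr ⟨rfl, ?_⟩
        have hWc := hfiJT.2.2.resolve_left (not_not_intro hk2)
        exact hWc
      · exact absurd hk2 hk
    · -- nfi rule
      subst hhead
      refine mem_JT_nfi.2 ⟨hrd.1, hrd.2, c, hc, hpc, f, ?_, ?_⟩
      · intro q hq
        have h1 := hf q hq
        have h2 := mem_JT_su.1 (hbody (Set.mem_image_of_mem _ hq))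
        exact ⟨h1.1, h1.2.1, h1.2.2, h2.2⟩
      · rcases hcond with hstrict | ⟨_, hX⟩
        · exact Or.inl (strictIf_eq_strict.1 hstrict)
        · right
          have hK := (cmin_inner (nfiLit r)
            (fun q => ∀ s ∈ (EForm D).rules, s.head = q →
              ((EForm D).prec s _ ∨ (s.body ∩ (JTs D T F, JFs D T F adl).2).Nonempty))).1 hX
          rcases hK _ (memP2 hrd.1) rfl with hFa | hne
          · exact hFa.elim
          · obtain ⟨x, hx1, hx2⟩ := hne
            rw [Set.mem_singleton_iff] at hx1
            subst hx1
            rcases mem_JF_su.1 hx2 with h' | h'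
            · exact absurd hrd.1 h'
            · exact h'
  · intro hl
    rcases l with (a | ⟨r, _ | _⟩) | (a | ⟨r, _ | _⟩)
    · -- pos (inl a)
      rw [← hT] at hl
      obtain ⟨r, hr, hh, hb, hcond⟩ := hl
      have hk : r.kind ≠ RuleKind.defeater := by
        rcases hcond with h | ⟨h, _⟩ <;> rw [h] <;> simp
      refine ⟨_, memP3 hr hk, by rw [hh]; rfl, ?_, Or.inl rfl⟩
      refine Set.singleton_subset_iff.2 (mem_JT_fi.2 ⟨hr, hb, ?_⟩)
      rcases hcond with h | ⟨hd, hWc⟩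
      · exact Or.inl (by rw [h]; simp)
      · refine Or.inr (show Wc D F r from ?_)
        unfold Wc
        rw [hh]
        exact hWc
    · -- pos (inr (r, false)) : fi
      obtain ⟨hr, hbT, hdisj⟩ := hl
      refine ⟨_, memP2 hr, rfl, Set.singleton_subset_iff.2 (mem_JT_su.2 ⟨hr, hbT⟩), ?_⟩
      by_cases hks : r.kind = RuleKind.strict
      · exact Or.inl (strictIf_pos hks)
      · refine Or.inr ⟨strictIf_neg hks, ?_⟩
        refine (cmin_inner (fiLit r) _).2 ?_
        intro s' hs' hh'
        refine Or.inr ?_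
        by_cases hkd : r.kind = RuleKind.defeasible
        · have hWc := hdisj.resolve_left (not_not_intro hkd)
          exact (X_iff_Wc (adl := adl) (T := T) (F := F) hwf p₀ hr hkd).2 hWc s' hs' hh'
        · obtain ⟨⟨_, hkd'⟩, _⟩ := ruleE_head_nfi hs' hh'
          exact absurd hkd' hkd
    · -- pos (inr (r, true)) : su
      obtain ⟨hr, hbT⟩ := hl
      refine ⟨_, memP1 hr, rfl, ?_, Or.inl rfl⟩
      rintro x ⟨q, hq, rfl⟩
      exact mem_JT_lift.2 (hbT hq)
    · -- neg (inl a)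
      rw [← hT] at hl
      obtain ⟨r, hr, hh, hb, hcond⟩ := hl
      have hk : r.kind ≠ RuleKind.defeater := by
        rcases hcond with h | ⟨h, _⟩ <;> rw [h] <;> simp
      refine ⟨_, memP3 hr hk, by rw [hh]; rfl, ?_, Or.inl rfl⟩
      refine Set.singleton_subset_iff.2 (mem_JT_fi.2 ⟨hr, hb, ?_⟩)
      rcases hcond with h | ⟨hd, hWc⟩
      · exact Or.inl (by rw [h]; simp)
      · refine Or.inr (show Wc D F r from ?_)
        unfold Wc
        rw [hh]
        exact hWc
    · -- neg (inr (r, false)) : nfi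
      obtain ⟨hrr, hkd, c, hc, hpc, f, hfv, hdisj⟩ := hl
      refine ⟨_, memP4 ⟨hrr, hkd⟩ hc hpc
        (fun q hq => ⟨(hfv q hq).1, (hfv q hq).2.1, (hfv q hq).2.2.1⟩), rfl, ?_, ?_⟩
      · rintro x ⟨q, hq, rfl⟩
        exact mem_JT_su.2 ⟨(hfv q hq).1, (hfv q hq).2.2.2⟩
      · by_cases hsc : ∀ q ∈ c \ {r.head}, (f q).kind = RuleKind.strict ∨ D.prec r (f q)
        · exact Or.inl (strictIf_pos hsc)
        · refine Or.inr ⟨strictIf_neg hsc, ?_⟩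
          have hbF : (r.body ∩ F).Nonempty := hdisj.resolve_left hsc
          refine (cmin_inner (nfiLit r) _).2 ?_
          intro s' hs' hh'
          obtain ⟨_, rfl⟩ := ruleE_head_fi hs' hh'
          exact Or.inr ⟨suLit r, rfl, mem_JF_su.2 (Or.inr hbF)⟩
    · -- neg (inr (r, true))
      exact hl.elim

lemma JF_unf {adl : Bool} {D : DTheory A} {T F : Set (Lit A)} (hwf : D.WellFormed)
    (p₀ : Lit A) (hFun : MUnf adl D (T, F) F) :
    MUnf adl (EForm D) (JTs D T F, JFs D T F adl) (JFs D T F adl) := by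
  intro l hl
  constructor
  · -- strict rules
    rintro e ⟨he, hks⟩ hh
    rcases ruleE_cases he with ⟨r, hr, rfl⟩ | ⟨r, hr, rfl⟩ | ⟨r, hr, hk, rfl⟩ |
      ⟨r, hrd, c, hc, hpc, f, hf, rfl⟩
    · -- su rule
      subst hh
      rcases mem_JF_su.1 hl with h' | ⟨q, hqb, hqF⟩
      · exact absurd hr h'
      · exact ⟨liftLit q, Set.mem_image_of_mem _ hqb, Or.inl (mem_JF_lift.2 hqF)⟩
    · -- fi rule
      subst hh
      rcases mem_JF_fi.1 hl with h' | hne | ⟨hkd, hU⟩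
      · exact absurd hr h'
      · exact ⟨suLit r, rfl, Or.inl (mem_JF_su.2 (Or.inr hne))⟩
      · rw [hkd] at hks
        exact absurd (strictIf_eq_strict.1 hks) (by simp)
    · -- lift rule
      subst hh
      have hpF : r.head ∈ F := mem_JF_lift.1 hl
      have h2 := hFun r.head hpF
      refine ⟨fiLit r, rfl, Or.inl (mem_JF_fi.2 ?_)⟩
      rcases hk2 : r.kind with _ | _ | _
      · have h3 := h2.1 r ⟨hr, hk2⟩ rfl
        refine Or.inr (Or.inl ?_)
        simpa using h3
      · rcases h2.2 r ⟨hr, hk2⟩ rfl with h3 | h3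
        · refine Or.inr (Or.inl ?_)
          simpa using h3
        · exact Or.inr (Or.inr ⟨rfl, h3⟩)
      · exact absurd hk2 hk
    · -- nfi rule
      subst hh
      rcases mem_JF_nfi.1 hl hrd.1 hrd.2 c hc hpc f hf with ⟨q, hq, hne⟩ | ⟨hnsc, _, _⟩
      · exact ⟨suLit (f q), Set.mem_image_of_mem _ hq, Or.inl (mem_JF_su.2 (Or.inr hne))⟩
      · exact absurd (strictIf_eq_strict.1 hks) hnsc
  · -- defeasible rules
    rintro e ⟨he, hkde⟩ hh
    rcases ruleE_cases he with ⟨r, hr, rfl⟩ | ⟨r, hr, rfl⟩ | ⟨r, hr, hk, rfl⟩ |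
      ⟨r, hrd, c, hc, hpc, f, hf, rfl⟩
    · exact absurd hkde (by simp)
    · -- fi rule
      subst hh
      rcases mem_JF_fi.1 hl with h' | hne | ⟨hkd, hU⟩
      · exact absurd hr h'
      · exact Or.inl ⟨suLit r, rfl, Or.inl (mem_JF_su.2 (Or.inr hne))⟩
      · refine Or.inr ((cmin_inner2 (fiLit r) _).2 ?_)
        obtain ⟨e', he', hh', hbJ, hkc⟩ :=
          ucs_to_rule (adl := adl) (T := T) (F := F) hwf p₀ hr hkd hU
        exact ⟨e', he', hh', hbJ, selP_E hkc⟩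
    · exact absurd hkde (by simp)
    · -- nfi rule
      subst hh
      rcases mem_JF_nfi.1 hl hrd.1 hrd.2 c hc hpc f hf with ⟨q, hq, hne⟩ | ⟨hnsc, hadl, hbT⟩
      · exact Or.inl ⟨suLit (f q), Set.mem_image_of_mem _ hq, Or.inl (mem_JF_su.2 (Or.inr hne))⟩
      · subst hadl
        refine Or.inr ((cmin_inner2 (nfiLit r) _).2 ?_)
        refine ⟨_, memP2 hrd.1, rfl, Set.singleton_subset_iff.2 (mem_JT_su.2 ⟨hrd.1, hbT⟩), ?_⟩
        exact fun hc' => hc'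

lemma unf_sub {adl : Bool} {D : DTheory A} {T F : Set (Lit A)} (hwf : D.WellFormed)
    (hFmax : ∀ S, MUnf adl D (T, F) S → S ⊆ F) :
    ∀ S, MUnf adl (EForm D) (JTs D T F, JFs D T F adl) S → S ⊆ JFs D T F adl := by
  intro S hS
  have hsu : ∀ r : DRule A, r ∈ D.rules → suLit r ∈ JFs D T F adl ∪ S →
      (r.body ∩ (F ∪ {p | liftLit p ∈ S})).Nonempty := by
    intro r hr h
    rcases h with h | h
    · rcases mem_JF_su.1 h with h' | h'
      · exact absurd hr h'
      · exact h'.mono (Set.inter_subset_inter_right _ Set.subset_union_left)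
    · obtain ⟨x, hx1, hx2⟩ := (hS (suLit r) h).1 _ ⟨memP1 hr, rfl⟩ rfl
      obtain ⟨q, hq, rfl⟩ := hx1
      refine ⟨q, hq, ?_⟩
      rcases hx2 with h2 | h2
      · exact Or.inl (mem_JF_lift.1 h2)
      · exact Or.inr h2
  have hfi : ∀ r : DRule A, r ∈ D.rules → fiLit r ∈ JFs D T F adl ∪ S →
      ((r.body ∩ (F ∪ {p | liftLit p ∈ S})).Nonempty ∨
        (r.kind = RuleKind.defeasible ∧ UcS D T adl r)) := by
    intro r hr h
    rcases h with h | h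
    · rcases mem_JF_fi.1 h with h' | h' | h'
      · exact absurd hr h'
      · exact Or.inl (h'.mono (Set.inter_subset_inter_right _ Set.subset_union_left))
      · exact Or.inr h'
    · by_cases hks : r.kind = RuleKind.strict
      · obtain ⟨x, hx1, hx2⟩ := (hS (fiLit r) h).1 _ ⟨memP2 hr, strictIf_pos hks⟩ rfl
        rw [Set.mem_singleton_iff] at hx1
        subst hx1
        exact Or.inl (hsu r hr hx2)
      · rcases (hS (fiLit r) h).2 _ ⟨memP2 hr, strictIf_neg hks⟩ rfl with hne | hesc
        · obtain ⟨x, hx1, hx2⟩ := hne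
          rw [Set.mem_singleton_iff] at hx1
          subst hx1
          exact Or.inl (hsu r hr hx2)
        · exact Or.inr (rule_to_ucs ((cmin_inner2 (fiLit r) _).1 hesc))
  have hS0 : MUnf adl D (T, F) {p | liftLit p ∈ S} := by
    intro p hp
    constructor
    · intro r hrRs hh
      have hk3 : r.kind ≠ RuleKind.defeater := by rw [hrRs.2]; simp
      obtain ⟨x, hx1, hx2⟩ :=
        (hS (liftLit p) hp).1 _ ⟨memP3 hrRs.1 hk3, rfl⟩ (by rw [hh])
      rw [Set.mem_singleton_iff] at hx1
      subst hx1
      rcases hfi r hrRs.1 hx2 with hne | ⟨hkd, _⟩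
      · exact hne
      · rw [hrRs.2] at hkd
        exact absurd hkd (by simp)
    · intro r hrRd hh
      have hk3 : r.kind ≠ RuleKind.defeater := by rw [hrRd.2]; simp
      obtain ⟨x, hx1, hx2⟩ :=
        (hS (liftLit p) hp).1 _ ⟨memP3 hrRd.1 hk3, rfl⟩ (by rw [hh])
      rw [Set.mem_singleton_iff] at hx1
      subst hx1
      rcases hfi r hrRd.1 hx2 with hne | ⟨_, hU⟩
      · exact Or.inl hne
      · refine Or.inr ?_
        rw [← hh]
        exact hU
  have key : {p : Lit A | liftLit p ∈ S} ⊆ F := hFmax _ hS0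
  have hFS : F ∪ {p : Lit A | liftLit p ∈ S} ⊆ F := Set.union_subset le_rfl key
  intro l hl
  rcases l with (a | ⟨r, _ | _⟩) | (a | ⟨r, _ | _⟩)
  · exact key hl
  · -- pos (inr (r, false)) : fi
    by_cases hr : r ∈ D.rules
    · rcases hfi r hr (Or.inr hl) with hne | hkU
      · exact Or.inr (Or.inl (hne.mono (Set.inter_subset_inter_right _ hFS)))
      · exact Or.inr (Or.inr hkU)
    · exact Or.inl hr
  · -- pos (inr (r, true)) : su
    by_cases hr : r ∈ D.rules
    · exact Or.inr ((hsu r hr (Or.inr hl)).mono (Set.inter_subset_inter_right _ hFS))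
    · exact Or.inl hr
  · exact key hl
  · -- neg (inr (r, false)) : nfi
    intro hrr hkd c hc hpc f hfv
    by_cases hsc : ∀ q ∈ c \ {r.head}, (f q).kind = RuleKind.strict ∨ D.prec r (f q)
    · obtain ⟨x, hx1, hx2⟩ :=
        (hS _ hl).1 _ ⟨memP4 ⟨hrr, hkd⟩ hc hpc hfv, strictIf_pos hsc⟩ rfl
      obtain ⟨q, hq, rfl⟩ := hx1
      exact Or.inl ⟨q, hq,
        (hsu (f q) (hfv q hq).1 hx2).mono (Set.inter_subset_inter_right _ hFS)⟩
    · rcases (hS _ hl).2 _ ⟨memP4 ⟨hrr, hkd⟩ hc hpc hfv, strictIf_neg hsc⟩ rfl with hne | hesc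
      · obtain ⟨x, hx1, hx2⟩ := hne
        obtain ⟨q, hq, rfl⟩ := hx1
        exact Or.inl ⟨q, hq,
          (hsu (f q) (hfv q hq).1 hx2).mono (Set.inter_subset_inter_right _ hFS)⟩
      · obtain ⟨s', hs', hh', hbJ, hsel⟩ := (cmin_inner2 (nfiLit r) _).1 hesc
        obtain ⟨_, rfl⟩ := ruleE_head_fi hs' hh'
        have hbT : r.body ⊆ T := (mem_JT_su.1 (hbJ rfl)).2
        refine Or.inr ⟨hsc, ?_, hbT⟩
        cases adl with
        | false => rfl
        | true =>
          rcases hsel with hFa | hstr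
          · exact hFa.elim
          · have := strictIf_eq_strict.1 hstr
            rw [hkd] at this
            exact absurd this (by simp)
  · trivial

lemma core (adl : Bool) (D : DTheory A) (hwf : D.WellFormed)
    (ID : Interp (Lit A)) (IE : Interp (Lit (A ⊕ DRule A × Bool)))
    (hID : (TD D ID, UMg adl D ID) = ID)
    (hmin : ∀ J, (TD (EForm D) J, UMg adl (EForm D) J) = J → IE.1 ⊆ J.1 ∧ IE.2 ⊆ J.2)
    (p : Lit A) : (liftLit p ∈ IE.1 → p ∈ ID.1) ∧ (liftLit p ∈ IE.2 → p ∈ ID.2) := by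
  obtain ⟨T, F⟩ := ID
  rw [Prod.mk.injEq] at hID
  obtain ⟨hT, hF⟩ := hID
  have hFun := UMg_unfounded adl D (T, F)
  rw [hF] at hFun
  have hFmax : ∀ S, MUnf adl D (T, F) S → S ⊆ F := by
    intro S h
    rw [← hF]
    exact Set.subset_sUnion_of_mem h
  have h1 : TD (EForm D) (JTs D T F, JFs D T F adl) = JTs D T F := TD_E hwf p hT
  have h2 : UMg adl (EForm D) (JTs D T F, JFs D T F adl) = JFs D T F adl :=
    le_antisymm (Set.sUnion_subset (unf_sub hwf hFmax))
      (Set.subset_sUnion_of_mem (JF_unf hwf p hFun))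
  obtain ⟨m1, m2⟩ := hmin (JTs D T F, JFs D T F adl) (by rw [h1, h2])
  exact ⟨fun h => mem_JT_lift.1 (m1 h), fun h => mem_JF_lift.1 (m2 h)⟩

end Core

end DLWFS

namespace DLWFS

/-- Let `D` be a defeasible theory with `C_D[p]` finite for all literals `p`, and `E`
its defeater- and priority-free form. Taking the well-founded models of `D` and `E`
both under ADL, or both under NDL: for every literal `p` of `D`, if `p ∈ T_{E,WF}`
then `p ∈ T_{D,WF}`, and if `p ∈ F_{E,WF}` then `p ∈ F_{D,WF}`. -/
theorem eform_complete {A : Type*} (D : DTheory A) (hwf : D.WellFormed)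
    (hfin : ∀ p : Lit A, (D.Cset p).Finite) :
    (∀ (ID : Interp (Lit A)) (IE : Interp (Lit (A ⊕ DRule A × Bool))),
      IsWFModel (WA D) ID → IsWFModel (WA (EForm D)) IE →
      ∀ p : Lit A, (liftLit p ∈ IE.1 → p ∈ ID.1) ∧ (liftLit p ∈ IE.2 → p ∈ ID.2)) ∧
    (∀ (ID : Interp (Lit A)) (IE : Interp (Lit (A ⊕ DRule A × Bool))),
      IsWFModel (WN D) ID → IsWFModel (WN (EForm D)) IE →
      ∀ p : Lit A, (liftLit p ∈ IE.1 → p ∈ ID.1) ∧ (liftLit p ∈ IE.2 → p ∈ ID.2)) := by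
  constructor
  · intro ID IE hID hIE p
    refine core true D hwf ID IE ?_ ?_ p
    · rw [← UA_eq_UMg]
      exact hID.1
    · intro J hJ
      refine hIE.2 J ?_
      show (TD (EForm D) J, UA (EForm D) J) = J
      rw [UA_eq_UMg]
      exact hJ
  · intro ID IE hID hIE p
    refine core false D hwf ID IE ?_ ?_ p
    · rw [← UN_eq_UMg]
      exact hID.1
    · intro J hJ
      refine hIE.2 J ?_
      show (TD (EForm D) J, UN (EForm D) J) = J
      rw [UN_eq_UMg]
      exact hJ

end DLWFS
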